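/- Let m ≥ n ≥ 0 be integers and a ∈ ℂ. Then for every square-summable sequence (u_k)_{k≥0} of complex numbers, |a|²·( Σ_{k=0}^{∞} (m+k−n+1)/(m+k+1)²·|u_k|² − Σ_{k=m−n}^{∞} (n+k−m+1)/(n+k+1)²·|u_k|² ) ≥ 0. (Theorem: the Toeplitz operator with symbol a·z^m·z̄^n, m ≥ n, acting on the Bergman space is hyponormal.) -/

import Mathlib

/-- The Toeplitz operator with symbol `a·z^m·z̄^n`, `m ≥ n`, acting on the Bergman
space is hyponormal: its self-commutator quadratic form, expressed in the monomial
basis coefficients `u_k`, is nonnegative. -/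
theorem monomial_hyponormal (m n : ℕ) (h : n ≤ m) (a : ℂ) (u : ℕ → ℂ)
    (hu : Summable fun k : ℕ => ‖u k‖ ^ 2) :
    0 ≤ ‖a‖ ^ 2 *
      ((∑' k : ℕ, ((m : ℝ) + k - n + 1) / ((m : ℝ) + k + 1) ^ 2 * ‖u k‖ ^ 2)
        - ∑' k : ℕ, ((n : ℝ) + (k + (m - n) : ℕ) - m + 1)
            / ((n : ℝ) + (k + (m - n) : ℕ) + 1) ^ 2 * ‖u (k + (m - n))‖ ^ 2) := by
  set d := m - n with hd
  have hmn : (n : ℝ) ≤ (m : ℝ) := by exact_mod_cast h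
  set f : ℕ → ℝ := fun k => ((m : ℝ) + k - n + 1) / ((m : ℝ) + k + 1) ^ 2 * ‖u k‖ ^ 2 with hf
  set g : ℕ → ℝ := fun k => ((n : ℝ) + (k + d : ℕ) - m + 1)
      / ((n : ℝ) + (k + d : ℕ) + 1) ^ 2 * ‖u (k + d)‖ ^ 2 with hg
  have hden : ∀ k : ℕ, (0:ℝ) < ((m : ℝ) + k + 1) ^ 2 := by
    intro k
    positivity
  have hfnonneg : ∀ k, 0 ≤ f k := by
    intro k
    apply mul_nonneg _ (by positivity)
    apply div_nonneg _ (le_of_lt (hden k))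
    have : (0:ℝ) ≤ (k:ℝ) := Nat.cast_nonneg k
    linarith
  have hfle : ∀ k, f k ≤ ‖u k‖ ^ 2 := by
    intro k
    have hk : (0:ℝ) ≤ (k:ℝ) := Nat.cast_nonneg k
    have hcoef : ((m : ℝ) + k - n + 1) / ((m : ℝ) + k + 1) ^ 2 ≤ 1 := by
      rw [div_le_one (hden k)]
      nlinarith [Nat.cast_nonneg (α := ℝ) m, Nat.cast_nonneg (α := ℝ) n]
    calc f k ≤ 1 * ‖u k‖ ^ 2 := by
            apply mul_le_mul_of_nonneg_right hcoef (by positivity)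
      _ = ‖u k‖ ^ 2 := one_mul _
  have hfsum : Summable f :=
    Summable.of_nonneg_of_le hfnonneg hfle hu
  have hcast : ∀ k : ℕ, ((k + d : ℕ) : ℝ) = (k : ℝ) + (m : ℝ) - n := by
    intro k
    push_cast [hd, Nat.cast_sub h]
    ring
  have hkey : ∀ k, g k ≤ f (k + d) := by
    intro k
    have hk : (0:ℝ) ≤ (k:ℝ) := Nat.cast_nonneg k
    have hp : (0:ℝ) ≤ (m:ℝ) - n := by linarith
    apply mul_le_mul_of_nonneg_right _ (by positivity)
    rw [hcast k]
    have e1 : (n : ℝ) + ((k : ℝ) + (m : ℝ) - n) - m + 1 = (k:ℝ) + 1 := by ring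
    have e2 : (n : ℝ) + ((k : ℝ) + (m : ℝ) - n) + 1 = (m:ℝ) + k + 1 := by ring
    rw [e1, e2]
    have hA : (0:ℝ) < (m:ℝ) + k + 1 := by linarith
    have hB : (0:ℝ) < (m:ℝ) + ((k:ℝ) + (m:ℝ) - n) + 1 := by linarith
    rw [div_le_div_iff₀ (by positivity) (by positivity)]
    nlinarith [mul_nonneg hp hp, mul_nonneg (mul_nonneg hp hp) hk,
      mul_nonneg hp hk, mul_nonneg (mul_nonneg hp (Nat.cast_nonneg (α := ℝ) m)) hk,
      mul_nonneg hp (mul_nonneg (Nat.cast_nonneg (α := ℝ) m) (Nat.cast_nonneg (α := ℝ) m)),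
      mul_nonneg hp (Nat.cast_nonneg (α := ℝ) m),
      mul_nonneg (Nat.cast_nonneg (α := ℝ) m) hk]
  have hgnonneg : ∀ k, 0 ≤ g k := by
    intro k
    simp only [hg, hcast k]
    have hk : (0:ℝ) ≤ (k:ℝ) := Nat.cast_nonneg k
    have e1 : (n : ℝ) + ((k : ℝ) + (m : ℝ) - n) - m + 1 = (k:ℝ) + 1 := by ring
    have e2 : (n : ℝ) + ((k : ℝ) + (m : ℝ) - n) + 1 = (m:ℝ) + k + 1 := by ring
    rw [e1, e2]
    positivity
  have hgsum : Summable g := by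
    apply Summable.of_nonneg_of_le hgnonneg (fun k => le_trans (hkey k) (hfle (k + d)))
    exact hu.comp_injective (add_left_injective d)
  have hmain : ∑' k, g k ≤ ∑' k, f k := by
    apply Summable.tsum_le_tsum_of_inj (fun k => k + d) (add_left_injective d)
      (fun c _ => hfnonneg c) hkey hgsum hfsum
  have : (0:ℝ) ≤ (∑' k, f k) - ∑' k, g k := by linarith
  exact mul_nonneg (by positivity) this
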